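/- Fix R > 0, g > 0, a constant η̄ ∈ ℝ, and a differentiable bottom depth H(θ,φ). On a domain where σ = cos(φ) > 0, set η_σ = η̄ cos(φ), h_σ = η_σ + H_σ with H_σ = H cos(φ), assume h_σ > 0, and set Q_θ ≡ 0, Q_φ ≡ 0. Then (h_σ, Q_θ, Q_φ) is a stationary solution of the shallow water system on the sphere: ∂_t h_σ + (1/R)(∂_θ(Q_θ/σ) + ∂_φ Q_φ) = 0; ∂_t Q_θ + (1/R)∂_θ(Q_θ²/(h_σ σ)) + (1/R)∂_φ(Q_θ Q_φ/h_σ) + (Q_θ Q_φ/(R h_σ σ))∂_φ σ + (g h_σ/(R σ²))∂_θ η_σ = 0; ∂_t Q_φ + (1/R)∂_θ(Q_φ Q_θ/(h_σ σ)) + (1/R)∂_φ(Q_φ²/h_σ) − (Q_θ²/(R h_σ σ) + g h_σ η_σ/(R σ²))∂_φ σ + (g h_σ/(R σ))∂_φ η_σ = 0. -/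

import Mathlib

/-- the water-at-rest state `η_σ = η̄ cos φ`, `Q_θ = Q_φ = 0`
(with `h_σ = η_σ + H_σ`, `H_σ = H cos φ`) is a stationary solution of the
shallow water system on the sphere, at every point where `σ = cos φ > 0`
and `h_σ > 0`. -/
theorem water_at_rest_on_sphere_is_stationary_solution
    (R g ηbar : ℝ) (hR : 0 < R) (hg : 0 < g) (H : ℝ → ℝ → ℝ)
    (hH : ∀ θ φ : ℝ,
      DifferentiableAt ℝ (fun θ' => H θ' φ) θ ∧
      DifferentiableAt ℝ (fun φ' => H θ φ') φ) :
    let ησ : ℝ → ℝ := fun φ => ηbar * Real.cos φ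
    let hσ : ℝ → ℝ → ℝ → ℝ := fun θ φ _t =>
      ηbar * Real.cos φ + H θ φ * Real.cos φ
    let Qθ : ℝ → ℝ → ℝ → ℝ := fun _ _ _ => 0
    let Qφ : ℝ → ℝ → ℝ → ℝ := fun _ _ _ => 0
    ∀ θ φ t : ℝ, 0 < Real.cos φ → 0 < hσ θ φ t →
      -- mass equation
      (deriv (fun t' => hσ θ φ t') t +
          (1 / R) * (deriv (fun θ' => Qθ θ' φ t / Real.cos φ) θ +
            deriv (fun φ' => Qφ θ φ' t) φ) = 0) ∧
      -- θ-momentum equation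
      (deriv (fun t' => Qθ θ φ t') t +
          (1 / R) * deriv (fun θ' =>
            (Qθ θ' φ t) ^ 2 / (hσ θ' φ t * Real.cos φ)) θ +
          (1 / R) * deriv (fun φ' =>
            Qθ θ φ' t * Qφ θ φ' t / hσ θ φ' t) φ +
          (Qθ θ φ t * Qφ θ φ t / (R * hσ θ φ t * Real.cos φ)) *
            deriv (fun φ' => Real.cos φ') φ +
          (g * hσ θ φ t / (R * (Real.cos φ) ^ 2)) *
            deriv (fun _θ' : ℝ => ησ φ) θ = 0) ∧
      -- φ-momentum equation
      (deriv (fun t' => Qφ θ φ t') t +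
          (1 / R) * deriv (fun θ' =>
            Qφ θ' φ t * Qθ θ' φ t / (hσ θ' φ t * Real.cos φ)) θ +
          (1 / R) * deriv (fun φ' => (Qφ θ φ' t) ^ 2 / hσ θ φ' t) φ -
          ((Qθ θ φ t) ^ 2 / (R * hσ θ φ t * Real.cos φ) +
              g * hσ θ φ t * ησ φ / (R * (Real.cos φ) ^ 2)) *
            deriv (fun φ' => Real.cos φ') φ +
          (g * hσ θ φ t / (R * Real.cos φ)) *
            deriv (fun φ' => ησ φ') φ = 0) := by
  intro ησ hσ Qθ Qφ θ φ t hcos hh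
  have hcne : Real.cos φ ≠ 0 := ne_of_gt hcos
  refine ⟨?_, ?_, ?_⟩
  · simp [hσ, Qθ, Qφ, deriv_const']
  · simp [hσ, ησ, Qθ, Qφ, deriv_const']
  · have h1 : deriv (fun φ' => Real.cos φ') φ = -Real.sin φ := Real.deriv_cos
    have h2 : deriv (fun φ' : ℝ => ηbar * Real.cos φ') φ = ηbar * (-Real.sin φ) := by
      simpa using (Real.hasDerivAt_cos φ).const_mul ηbar |>.deriv
    have hne : ηbar + H θ φ ≠ 0 := by
      intro h0
      have e : hσ θ φ t = (ηbar + H θ φ) * Real.cos φ := by simp only [hσ]; ring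
      rw [e, h0, zero_mul] at hh
      exact lt_irrefl 0 hh
    simp only [hσ, ησ, Qθ, Qφ, deriv_const', ne_eq, OfNat.ofNat_ne_zero, not_false_eq_true, zero_pow, zero_mul, mul_zero, zero_div, deriv_const, h1, h2]
    field_simp
    ring
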